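/- Let G = (V, E) be a finite directed graph with no self-loops, Q ∈ ℕ, Δ ∈ ℝ, and let F_v, G_{uv}, H_v : ℝ → ℝ be convex functions, with J(x) = Σ_{v∈V} F_v(x_v) + Σ_{(u,v)∈E} G_{uv}(x_u − x_v) and H(x) = Σ_{v∈V} H_v(x_v) for x ∈ ℤ^V. Call x ∈ ℤ^V feasible if 0 ≤ x_v ≤ Q for all v and H(x) ≤ Δ. Suppose x is feasible and 𝔊_{A_TV}-optimal, i.e., for every g = (g_x, g_a) in the Graver basis 𝔊_{A_TV} such that x + g_x is feasible, J(x + g_x) ≥ J(x). Then x is 1-optimal: J(x) ≤ J(x') for every feasible x' with Σ_{v∈V} |x_v − x'_v| ≤ 1. -/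

import Mathlib

open scoped Classical

/-- The undirected support graph of the directed edge set `E`. -/
def undirGraph {V : Type*} (E : Finset (V × V)) : SimpleGraph V where
  Adj u v := u ≠ v ∧ ((u, v) ∈ E ∨ (v, u) ∈ E)
  symm := by
    constructor
    intro u v h
    exact ⟨h.1.symm, h.2.elim Or.inr Or.inl⟩
  loopless := by constructor; intro u h; exact h.1 rfl

/-- `S ⊆ V` induces a connected subgraph of the (undirected version of the) graph. -/
def InducesConnected {V : Type*} (E : Finset (V × V)) (S : Set V) : Prop :=
  S.Nonempty ∧ ((undirGraph E).induce S).Connected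

/-- Integer indicator vector of a set of vertices. -/
noncomputable def chiV {V : Type*} (S : Set V) : V → ℤ :=
  S.indicator 1

/-- Integer indicator vector of a set of edges. -/
noncomputable def chiE {V : Type*} {E : Finset (V × V)}
    (T : Set {e : V × V // e ∈ E}) : {e : V × V // e ∈ E} → ℤ :=
  T.indicator 1

/-- Outgoing edges of `S`. -/
def deltaPlus {V : Type*} (E : Finset (V × V)) (S : Set V) :
    Set {e : V × V // e ∈ E} :=
  {e | (e : V × V).1 ∈ S ∧ (e : V × V).2 ∉ S}

/-- Incoming edges of `S`. -/
def deltaMinus {V : Type*} (E : Finset (V × V)) (S : Set V) :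
    Set {e : V × V // e ∈ E} :=
  {e | (e : V × V).1 ∉ S ∧ (e : V × V).2 ∈ S}

/-- The conformal (sign-compatible, coordinatewise) partial order `x ⊑ y`. -/
def Sqle {ι : Type*} (x y : ι → ℤ) : Prop :=
  ∀ i, 0 ≤ x i * y i ∧ |x i| ≤ |y i|

/-- `(x, a)` lies in the integer kernel of `A_TV`. -/
def InKerATV {V : Type*} (E : Finset (V × V)) (x : V → ℤ)
    (a : {e : V × V // e ∈ E} → ℤ) : Prop :=
  ∀ e : {e : V × V // e ∈ E}, x (e : V × V).1 - x (e : V × V).2 = a e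

/-- `(x, a)` is a Graver basis element of `A_TV`: a `⊑`-minimal nonzero
element of the integer kernel. -/
def InGraverATV {V : Type*} (E : Finset (V × V)) (x : V → ℤ)
    (a : {e : V × V // e ∈ E} → ℤ) : Prop :=
  InKerATV E x a ∧ ¬(x = 0 ∧ a = 0) ∧
    ∀ (x' : V → ℤ) (a' : {e : V × V // e ∈ E} → ℤ),
      InKerATV E x' a' → ¬(x' = 0 ∧ a' = 0) → Sqle x' x → Sqle a' a →
        x' = x ∧ a' = a

/-- The objective `J(x) = Σ_v F_v(x_v) + Σ_{(u,v)∈E} G_{uv}(x_u − x_v)`. -/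
noncomputable def JObj {V : Type*} [Fintype V] (E : Finset (V × V))
    (F : V → ℝ → ℝ) (Gf : V × V → ℝ → ℝ) (x : V → ℤ) : ℝ :=
  (∑ v, F v (x v : ℝ)) + ∑ e ∈ E, Gf e ((x e.1 : ℝ) - (x e.2 : ℝ))

/-- The budget `H(x) = Σ_v H_v(x_v)`. -/
noncomputable def HObj {V : Type*} [Fintype V] (Hf : V → ℝ → ℝ) (x : V → ℤ) : ℝ :=
  ∑ v, Hf v (x v : ℝ)

/-- A feasible `𝔊_{A_TV}`-optimal point is 1-optimal: it is at
least as good as every feasible point at `ℓ¹`-distance at most 1. -/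
theorem graver_optimal_implies_one_optimal
    {V : Type*} [Fintype V] [DecidableEq V] (E : Finset (V × V))
    (hloop : ∀ e ∈ E, e.1 ≠ e.2) (Q : ℕ) (Δ : ℝ)
    (F : V → ℝ → ℝ) (Gf : V × V → ℝ → ℝ) (Hf : V → ℝ → ℝ)
    (hF : ∀ v, ConvexOn ℝ Set.univ (F v))
    (hG : ∀ e ∈ E, ConvexOn ℝ Set.univ (Gf e))
    (hH : ∀ v, ConvexOn ℝ Set.univ (Hf v))
    (x : V → ℤ)
    (hfeas : (∀ v, 0 ≤ x v ∧ x v ≤ (Q : ℤ)) ∧ HObj Hf x ≤ Δ)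
    (hopt : ∀ (gx : V → ℤ) (ga : {e : V × V // e ∈ E} → ℤ),
      InGraverATV E gx ga →
      ((∀ v, 0 ≤ x v + gx v ∧ x v + gx v ≤ (Q : ℤ)) ∧ HObj Hf (x + gx) ≤ Δ) →
      JObj E F Gf x ≤ JObj E F Gf (x + gx)) :
    ∀ x' : V → ℤ,
      ((∀ v, 0 ≤ x' v ∧ x' v ≤ (Q : ℤ)) ∧ HObj Hf x' ≤ Δ) →
      (∑ v, |x v - x' v|) ≤ 1 →
      JObj E F Gf x ≤ JObj E F Gf x' := by
  intro x' hfeas' hdist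
  by_cases hxx : x' = x
  · rw [hxx]
  · have hne : ∃ v, x v ≠ x' v := by
      by_contra h
      push_neg at h
      exact hxx (funext fun u => (h u).symm)
    obtain ⟨v, hv⟩ := hne
    have hnn : ∀ u ∈ Finset.univ, u ∉ ({v} : Finset V) → (0:ℤ) ≤ |x u - x' u| :=
      fun u _ _ => abs_nonneg _
    have hdv1 : 1 ≤ |x v - x' v| := Int.one_le_abs (sub_ne_zero.mpr hv)
    have hothers : ∀ u, u ≠ v → x' u = x u := by
      intro u hu
      by_contra h
      have h1 : 1 ≤ |x u - x' u| :=
        Int.one_le_abs (sub_ne_zero.mpr fun hh => h hh.symm)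
      have hsub : ({u, v} : Finset V) ⊆ Finset.univ := Finset.subset_univ _
      have hpair : ∑ w ∈ ({u, v} : Finset V), |x w - x' w|
          = |x u - x' u| + |x v - x' v| := Finset.sum_pair hu
      have hsum : |x u - x' u| + |x v - x' v| ≤ ∑ w, |x w - x' w| := by
        rw [← hpair]
        exact Finset.sum_le_sum_of_subset_of_nonneg hsub fun w _ _ => abs_nonneg _
      omega
    have hdv : |x v - x' v| = 1 := by
      have hle : |x v - x' v| ≤ ∑ w, |x w - x' w| :=
        Finset.single_le_sum (f := fun w => |x w - x' w|)
          (fun w _ => abs_nonneg _) (Finset.mem_univ v)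
      omega
    set gx : V → ℤ := fun u => x' u - x u with hgx
    set ga : {e : V × V // e ∈ E} → ℤ := fun e => gx (e : V × V).1 - gx (e : V × V).2
    have hgx0 : ∀ u, u ≠ v → gx u = 0 := fun u hu => by simp [hgx, hothers u hu]
    have hgv : gx v = 1 ∨ gx v = -1 := by
      rcases (abs_eq (by norm_num : (0:ℤ) ≤ 1)).mp hdv with h | h
      · right; simp only [hgx]; omega
      · left; simp only [hgx]; omega
    have hgraver : InGraverATV E gx ga := by
      refine ⟨fun e => rfl, ?_, ?_⟩
      · rintro ⟨h1, -⟩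
        have hz := congrFun h1 v
        simp only [Pi.zero_apply] at hz
        rcases hgv with h | h <;> omega
      · intro x'' a'' hker hnz hsx hsa
        have hx0 : ∀ u, u ≠ v → x'' u = 0 := by
          intro u hu
          have := (hsx u).2
          rw [hgx0 u hu] at this
          simpa using this
        have hxv : x'' v = gx v := by
          rcases eq_or_ne (x'' v) 0 with h0 | h0
          · exfalso
            apply hnz
            have hx'' : x'' = 0 := funext fun u => by
              rcases eq_or_ne u v with rfl | hu
              · exact h0
              · exact hx0 u hu
            refine ⟨hx'', funext fun e => ?_⟩
            have := hker e
            rw [hx''] at this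
            simpa using this.symm
          · have h1 := (hsx v).1
            have h2 := (hsx v).2
            have h0' : x'' v = 1 ∨ x'' v = -1 := by
              rcases hgv with h | h <;> rw [h] at h2 <;>
                simp only [abs_one, abs_neg] at h2 <;>
                rcases abs_le.mp h2 with ⟨ha, hb⟩ <;> omega
            rcases hgv with h | h <;> rw [h] at h1 ⊢
            · rw [mul_one] at h1; omega
            · rw [mul_neg_one] at h1; omega
        have hxeq : x'' = gx := funext fun u => by
          rcases eq_or_ne u v with rfl | hu
          · exact hxv
          · rw [hx0 u hu, hgx0 u hu]
        refine ⟨hxeq, funext fun e => ?_⟩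
        have := hker e
        rw [hxeq] at this
        exact this.symm
    have hxg : x + gx = x' := funext fun u => by simp [hgx]
    have := hopt gx ga hgraver (by rw [hxg]; exact ⟨fun u => by
      have := hfeas'.1 u
      have h2 := congrFun hxg u
      simp only [Pi.add_apply] at h2
      omega, hfeas'.2⟩)
    rwa [hxg] at this
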